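/- For every even integer d ≥ 2, the Vapnik–Chervonenkis dimension of the family 𝓓_d of all closed degenerate balls in ℓ∞^d satisfies 3d/2 ≤ VC-dim(𝓓_d) ≤ 3d/2 + 1. -/

import Mathlib

open Set Metric

/-- A family `E` of subsets of `X` shatters a set `σ` if every subset of `σ`
is carved out by some member of `E`. -/
def Shatters {X : Type*} (E : Set (Set X)) (σ : Set X) : Prop :=
  ∀ T ⊆ σ, ∃ C ∈ E, C ∩ σ = T

/-- Vapnik–Chervonenkis dimension: supremum of cardinalities of finite shattered sets. -/
noncomputable def vcDim {X : Type*} (E : Set (Set X)) : ℕ∞ :=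
  ⨆ (σ : Finset X) (_ : Shatters E ↑σ), (σ.card : ℕ∞)

/-- The family of all closed balls in `ℓ∞^d` (sup-norm balls = axis-parallel cubes,
including singletons as balls of radius 0). -/
def Cd (d : ℕ) : Set (Set (Fin d → ℝ)) :=
  {C | ∃ x : Fin d → ℝ, ∃ r : ℝ, 0 ≤ r ∧ C = Metric.closedBall x r}

/-- A closed degenerate ball in `ℓ∞^d`: a product of closed intervals, each of which is
unbounded on at least one side, i.e. of the form `(-∞, b]`, `[a, ∞)` or all of `ℝ`. -/
def IsDegBall {d : ℕ} (C : Set (Fin d → ℝ)) : Prop :=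
  ∃ I : Fin d → Set ℝ,
    (∀ i, (∃ b, I i = Set.Iic b) ∨ (∃ a, I i = Set.Ici a) ∨ I i = Set.univ) ∧
    C = {x | ∀ i, x i ∈ I i}

/-- The family of all closed degenerate balls in `ℓ∞^d`. -/
def Dd (d : ℕ) : Set (Set (Fin d → ℝ)) := {C | IsDegBall C}

/-- The family of closed degenerate balls in `ℓ∞^d` containing the set `F`. -/
def DdF (d : ℕ) (F : Set (Fin d → ℝ)) : Set (Set (Fin d → ℝ)) :=
  {C | IsDegBall C ∧ F ⊆ C}

/-- The family of closed degenerate balls in `ℓ∞^d` containing the origin. -/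
def Dd0 (d : ℕ) : Set (Set (Fin d → ℝ)) := DdF d {0}

noncomputable section

/-- signed coordinate value at a slot -/
def slotVal {d : ℕ} (s : Fin d × Bool) (x : Fin d → ℝ) : ℝ :=
  if s.2 then x s.1 else -(x s.1)

/-- `p` is the strict extreme of `σ` at slot `s`. -/
def StrictTop {d : ℕ} (σ : Finset (Fin d → ℝ)) (s : Fin d × Bool) (p : Fin d → ℝ) : Prop :=
  p ∈ σ ∧ ∀ q ∈ σ, q ≠ p → slotVal s q < slotVal s p

/-- From a degenerate ball, a direction assignment such that each excluded point
is strictly beyond the ball in some slot of matching direction. -/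
lemma degBall_dir {d : ℕ} {C : Set (Fin d → ℝ)} (hC : IsDegBall C) :
    ∃ dir : Fin d → Bool, ∀ p, p ∉ C →
      ∃ i, ∀ x ∈ C, slotVal (i, dir i) x < slotVal (i, dir i) p := by
  classical
  obtain ⟨I, hsh, rfl⟩ := hC
  refine ⟨fun i => if ∃ b, I i = Set.Iic b then true else false, ?_⟩
  intro p hp
  simp only [Set.mem_setOf_eq, not_forall] at hp
  obtain ⟨i, hpi⟩ := hp
  refine ⟨i, ?_⟩
  intro x hx
  have hxi : x i ∈ I i := hx i
  rcases hsh i with ⟨b, hb⟩ | ⟨a, ha⟩ | hu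
  · have : (∃ b, I i = Set.Iic b) := ⟨b, hb⟩
    simp only [this, if_pos, slotVal]
    rw [hb] at hxi hpi
    simp only [Set.mem_Iic, not_le] at hxi hpi
    simpa using lt_of_le_of_lt hxi hpi
  · have hne : ¬(∃ b, I i = Set.Iic b) := by
      rintro ⟨b, hb⟩
      rw [hb] at ha
      have h1 : a ∈ Set.Iic b := by rw [ha]; exact Set.mem_Ici.2 le_rfl
      have h2 : b + 1 ∈ Set.Iic b := by
        rw [ha]; exact Set.mem_Ici.2 (by linarith [Set.mem_Iic.1 h1])
      have := Set.mem_Iic.1 h2; linarith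
    simp only [hne, if_neg, if_false, slotVal]
    rw [ha] at hxi hpi
    simp only [Set.mem_Ici, not_le] at hxi hpi
    simpa using lt_of_lt_of_le hpi hxi
  · rw [hu] at hpi; exact absurd (Set.mem_univ _) hpi

/-- singleton deletion: every point of a shattered set is a strict extreme somewhere -/
lemma exists_strictTop {d : ℕ} {σ : Finset (Fin d → ℝ)} (hsh : Shatters (Dd d) ↑σ)
    {p : Fin d → ℝ} (hp : p ∈ σ) : ∃ s, StrictTop σ s p := by
  classical
  obtain ⟨C, hC, hCσ⟩ := hsh (↑σ \ {p}) Set.diff_subset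
  have hpC : p ∉ C := by
    intro h
    have : p ∈ C ∩ ↑σ := ⟨h, by exact_mod_cast hp⟩
    rw [hCσ] at this
    exact this.2 rfl
  obtain ⟨dir, hdir⟩ := degBall_dir hC
  obtain ⟨i, hi⟩ := hdir p hpC
  refine ⟨(i, dir i), hp, fun q hq hqp => ?_⟩
  apply hi
  have : q ∈ C ∩ ↑σ := by
    rw [hCσ]; exact ⟨by exact_mod_cast hq, hqp⟩
  exact this.1

/-- Two points tie at slot `t`, strictly above everyone else. -/
def TiePair {d : ℕ} (σ : Finset (Fin d → ℝ)) (t : Fin d × Bool) (p q : Fin d → ℝ) : Prop :=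
  p ∈ σ ∧ q ∈ σ ∧ p ≠ q ∧ slotVal t p = slotVal t q ∧
    ∀ r ∈ σ, r ≠ p → r ≠ q → slotVal t r < slotVal t p

lemma strictTop_unique {d : ℕ} {σ : Finset (Fin d → ℝ)} {s : Fin d × Bool}
    {p p' : Fin d → ℝ} (h : StrictTop σ s p) (h' : StrictTop σ s p') : p = p' := by
  by_contra hne
  have h1 := h.2 p' h'.1 (Ne.symm hne)
  have h2 := h'.2 p h.1 hne
  linarith

/-- pair deletion analysis: a conflict pair yields a tie slot -/
lemma conflict_pair_tie {d : ℕ} {σ : Finset (Fin d → ℝ)} (hsh : Shatters (Dd d) ↑σ)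
    {i : Fin d} {p q : Fin d → ℝ} (hpq : p ≠ q)
    (hp : StrictTop σ (i, true) p) (hpu : ∀ s, StrictTop σ s p → s = (i, true))
    (hq : StrictTop σ (i, false) q) (hqu : ∀ s, StrictTop σ s q → s = (i, false))
    (hwit : ∃ r ∈ σ, r ≠ p ∧ r ≠ q) :
    ∃ t, TiePair σ t p q := by
  classical
  obtain ⟨C, hC, hCσ⟩ := hsh (↑σ \ {p, q}) Set.diff_subset
  have hmemC : ∀ r ∈ σ, r ≠ p → r ≠ q → r ∈ C := by
    intro r hr h1 h2
    have : r ∈ C ∩ ↑σ := by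
      rw [hCσ]
      exact ⟨by exact_mod_cast hr, by simp [h1, h2]⟩
    exact this.1
  have hpC : p ∉ C := by
    intro h
    have : p ∈ C ∩ ↑σ := ⟨h, by exact_mod_cast hp.1⟩
    rw [hCσ] at this
    simp at this
  have hqC : q ∉ C := by
    intro h
    have : q ∈ C ∩ ↑σ := ⟨h, by exact_mod_cast hq.1⟩
    rw [hCσ] at this
    simp at this
  obtain ⟨dir, hdir⟩ := degBall_dir hC
  obtain ⟨ip, hip⟩ := hdir p hpC
  obtain ⟨iq, hiq⟩ := hdir q hqC
  set tp : Fin d × Bool := (ip, dir ip) with htp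
  set tq : Fin d × Bool := (iq, dir iq) with htq
  have hPp : ∀ r ∈ σ, r ≠ p → r ≠ q → slotVal tp r < slotVal tp p :=
    fun r hr h1 h2 => hip r (hmemC r hr h1 h2)
  have hPq : ∀ r ∈ σ, r ≠ p → r ≠ q → slotVal tq r < slotVal tq q :=
    fun r hr h1 h2 => hiq r (hmemC r hr h1 h2)
  obtain ⟨r0, hr0, hr0p, hr0q⟩ := hwit
  -- trichotomy at tp
  rcases lt_trichotomy (slotVal tp q) (slotVal tp p) with h1 | h1 | h1
  rotate_left
  · exact ⟨tp, hp.1, hq.1, hpq, h1.symm, hPp⟩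
  · -- q strictly top at tp : tp = (i, false)
    have hst : StrictTop σ tp q := by
      refine ⟨hq.1, fun r hr hrq => ?_⟩
      by_cases hrp : r = p
      · subst hrp; exact h1
      · exact lt_trans (hPp r hr hrp hrq) h1
    have htpv := hqu _ hst
    -- then at coordinate i, direction false : all r ≠ p,q have -r i < -p i,
    -- but p is strict max at (i,true): r i < p i. contradiction.
    have h2 := hPp r0 hr0 hr0p hr0q
    rw [htpv] at h2
    have h3 := hp.2 r0 hr0 hr0p
    simp only [slotVal, if_pos, if_neg, Bool.false_eq_true, not_false_iff] at h2 h3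
    simp at h2 h3
    linarith
  -- q < p at tp: p strictly top at tp, so tp = (i,true)
  have hst : StrictTop σ tp p := by
    refine ⟨hp.1, fun r hr hrp => ?_⟩
    by_cases hrq : r = q
    · subst hrq; exact h1
    · exact hPp r hr hrp hrq
  have htpv := hpu _ hst
  -- trichotomy at tq
  rcases lt_trichotomy (slotVal tq p) (slotVal tq q) with h2 | h2 | h2
  rotate_left
  · refine ⟨tq, hp.1, hq.1, hpq, h2, ?_⟩
    intro r hr hr1 hr2
    rw [h2]
    exact hPq r hr hr1 hr2
  · -- p strictly top at tq ⇒ tq = (i,true) = tp; but then same coordinate: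
    have hst2 : StrictTop σ tq p := by
      refine ⟨hp.1, fun r hr hrp => ?_⟩
      by_cases hrq : r = q
      · subst hrq; exact h2
      · exact lt_trans (hPq r hr hrp hrq) h2
    have htqv := hpu _ hst2
    -- tq = (i,true): q beats rest at (i,true): r0 i < q i; but q strict min: q i < r0 i
    have h3 := hPq r0 hr0 hr0p hr0q
    rw [htqv] at h3
    have h4 := hq.2 r0 hr0 hr0q
    simp only [slotVal] at h3 h4
    simp at h3 h4
    linarith
  · -- p < q at tq : q strictly top at tq ⇒ tq = (i,false)
    have hst2 : StrictTop σ tq q := by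
      refine ⟨hq.1, fun r hr hrq => ?_⟩
      by_cases hrp : r = p
      · subst hrp; exact h2
      · exact hPq r hr hrp hrq
    have htqv := hqu _ hst2
    -- now tp = (i,true), tq = (i,false): same coordinate ip = iq = i, so dir ip = dir iq,
    -- but second components true ≠ false
    have : ip = i := congrArg Prod.fst htpv
    have : iq = i := congrArg Prod.fst htqv
    have hd1 : dir ip = true := congrArg Prod.snd htpv
    have hd2 : dir iq = false := congrArg Prod.snd htqv
    rw [‹ip = i›] at hd1
    rw [‹iq = i›] at hd2
    rw [hd1] at hd2
    exact absurd hd2 (by simp)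

lemma tiePair_no_strictTop {d : ℕ} {σ : Finset (Fin d → ℝ)} {t : Fin d × Bool}
    {p q : Fin d → ℝ} (h : TiePair σ t p q) : ∀ z, ¬ StrictTop σ t z := by
  obtain ⟨hp, hq, hpq, heq, hrest⟩ := h
  intro z hz
  by_cases hzp : z = p
  · subst hzp
    have := hz.2 q hq (Ne.symm hpq)
    linarith
  by_cases hzq : z = q
  · subst hzq
    have := hz.2 p hp hpq
    linarith
  · have h1 := hrest z hz.1 hzp hzq
    have h2 := hz.2 p hp (fun h => hzp h.symm)
    linarith

lemma tiePair_overlap {d : ℕ} {σ : Finset (Fin d → ℝ)} {t : Fin d × Bool}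
    {p q p' q' : Fin d → ℝ} (h : TiePair σ t p q) (h' : TiePair σ t p' q') :
    p' = p ∨ p' = q ∨ q' = p ∨ q' = q := by
  by_contra hc
  push_neg at hc
  obtain ⟨h1, h2, h3, h4⟩ := hc
  have ha := h.2.2.2.2 p' h'.1 h1 h2
  have hb := h'.2.2.2.2 p h.1 (fun e => h1 e.symm) (fun e => h3 e.symm)
  linarith

theorem two_card_le_of_shatters {d : ℕ} (hd : 2 ≤ d) {σ : Finset (Fin d → ℝ)}
    (hsh : Shatters (Dd d) ↑σ) : 2 * σ.card ≤ 3 * d := by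
  classical
  by_cases hsmall : σ.card ≤ 2
  · omega
  push_neg at hsmall
  -- slots of a point
  set slots : (Fin d → ℝ) → Finset (Fin d × Bool) :=
    fun p => Finset.univ.filter (fun s => StrictTop σ s p) with hslots
  have hmem_slots : ∀ p s, s ∈ slots p ↔ StrictTop σ s p := by
    intro p s; simp [hslots]
  have hne : ∀ p ∈ σ, (slots p).Nonempty := by
    intro p hp
    obtain ⟨s, hs⟩ := exists_strictTop hsh hp
    exact ⟨s, (hmem_slots p s).2 hs⟩
  have hdisj : ∀ p q : Fin d → ℝ, p ≠ q → Disjoint (slots p) (slots q) := by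
    intro p q hpq
    rw [Finset.disjoint_left]
    intro s hsp hsq
    exact hpq (strictTop_unique ((hmem_slots p s).1 hsp) ((hmem_slots q s).1 hsq))
  set A : Finset (Fin d → ℝ) := σ.filter (fun p => (slots p).card = 1) with hA
  set B : Finset (Fin d → ℝ) := σ.filter (fun p => ¬ (slots p).card = 1) with hB
  have hABcard : A.card + B.card = σ.card := Finset.card_filter_add_card_filter_not _
  have hBtwo : ∀ p ∈ B, 2 ≤ (slots p).card := by
    intro p hp
    rw [hB, Finset.mem_filter] at hp
    have := hne p hp.1
    rw [← Finset.card_pos] at this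
    omega
  -- the unique slot of points of A
  set sl : (Fin d → ℝ) → Fin d × Bool :=
    fun p => if h : ∃ s, slots p = {s} then h.choose else ((⟨0, by omega⟩ : Fin d), true)
    with hsl
  have hslA : ∀ p ∈ A, slots p = {sl p} := by
    intro p hp
    rw [hA, Finset.mem_filter] at hp
    obtain ⟨s, hs⟩ := Finset.card_eq_one.1 hp.2
    have hex : ∃ s, slots p = {s} := ⟨s, hs⟩
    simp only [hsl, dif_pos hex]
    exact hex.choose_spec
  have hslTop : ∀ p ∈ A, StrictTop σ (sl p) p := by
    intro p hp
    have := hslA p hp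
    exact (hmem_slots p (sl p)).1 (by rw [this]; exact Finset.mem_singleton_self _)
  have hslUniq : ∀ p ∈ A, ∀ s, StrictTop σ s p → s = sl p := by
    intro p hp s hs
    have := (hmem_slots p s).2 hs
    rw [hslA p hp, Finset.mem_singleton] at this
    exact this
  have hslInj : ∀ p ∈ A, ∀ q ∈ A, sl p = sl q → p = q := by
    intro p hp q hq h
    exact strictTop_unique (hslTop p hp) (h ▸ hslTop q hq)
  -- conflict coordinates
  set K : Finset (Fin d) := Finset.univ.filter
    (fun i => (∃ p ∈ A, sl p = (i, true)) ∧ (∃ q ∈ A, sl q = (i, false))) with hK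
  -- Claim 1 : A.card ≤ d + K.card
  have claim1 : A.card ≤ d + K.card := by
    have hfib := Finset.card_eq_sum_card_fiberwise
      (f := fun p => (sl p).1) (s := A) (t := Finset.univ) (fun x _ => Finset.mem_univ _)
    have hfb : ∀ i : Fin d, (A.filter fun p => (sl p).1 = i).card ≤ if i ∈ K then 2 else 1 := by
      intro i
      by_cases hiK : i ∈ K
      · simp only [hiK, if_pos]
        have : (A.filter fun p => (sl p).1 = i).card ≤ (Finset.univ : Finset Bool).card := by
          apply Finset.card_le_card_of_injOn (fun p => (sl p).2) (fun x _ => Finset.mem_univ _)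
          intro x hx y hy hxy
          rw [Finset.coe_filter, Set.mem_setOf_eq] at hx hy
          apply hslInj x hx.1 y hy.1
          exact Prod.ext (hx.2.trans hy.2.symm) hxy
        simpa using this
      · simp only [hiK, if_neg, if_false]
        rw [Finset.card_le_one]
        intro x hx y hy
        rw [Finset.mem_filter] at hx hy
        by_cases hb : (sl x).2 = (sl y).2
        · exact hslInj x hx.1 y hy.1 (Prod.ext (hx.2.trans hy.2.symm) hb)
        · exfalso
          apply hiK
          rw [hK, Finset.mem_filter]
          refine ⟨Finset.mem_univ _, ?_⟩
          have hw : ∀ z ∈ A, (sl z).1 = i → ∀ b, (sl z).2 = b → sl z = (i, b) := by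
            intro z hz h1 b h2
            simp [Prod.ext_iff, h1, h2]
          cases hx2 : (sl x).2 with
          | true =>
            cases hy2 : (sl y).2 with
            | true => exact absurd (hx2.trans hy2.symm) hb
            | false => exact ⟨⟨x, hx.1, hw x hx.1 hx.2 _ hx2⟩, ⟨y, hy.1, hw y hy.1 hy.2 _ hy2⟩⟩
          | false =>
            cases hy2 : (sl y).2 with
            | true => exact ⟨⟨y, hy.1, hw y hy.1 hy.2 _ hy2⟩, ⟨x, hx.1, hw x hx.1 hx.2 _ hx2⟩⟩
            | false => exact absurd (hx2.trans hy2.symm) hb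
    calc A.card = ∑ i : Fin d, (A.filter fun p => (sl p).1 = i).card := hfib
      _ ≤ ∑ i : Fin d, (if i ∈ K then 2 else 1) := Finset.sum_le_sum (fun i _ => hfb i)
      _ = ∑ i : Fin d, (1 + if i ∈ K then 1 else 0) := by
          apply Finset.sum_congr rfl
          intro i _
          by_cases h : i ∈ K <;> simp [h]
      _ = d + K.card := by
          rw [Finset.sum_add_distrib, Finset.sum_ite_mem]
          simp
  -- Claim 2 : tie slots for conflict coordinates
  have hwit3 : ∀ p q : Fin d → ℝ, ∃ r ∈ σ, r ≠ p ∧ r ≠ q := by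
    intro p q
    have hns : ¬ σ ⊆ ({p, q} : Finset (Fin d → ℝ)) := by
      intro hsub
      have h1 := Finset.card_le_card hsub
      have h2 := Finset.card_insert_le p ({q} : Finset (Fin d → ℝ))
      simp at h2
      omega
    obtain ⟨r, hr, hr2⟩ := Finset.not_subset.1 hns
    simp at hr2
    exact ⟨r, hr, hr2.1, hr2.2⟩
  have htie : ∀ i ∈ K, ∃ t p q, p ∈ A ∧ q ∈ A ∧ sl p = (i, true) ∧ sl q = (i, false) ∧
      TiePair σ t p q := by
    intro i hi
    rw [hK, Finset.mem_filter] at hi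
    obtain ⟨-, ⟨p, hpA, hp⟩, ⟨q, hqA, hq⟩⟩ := hi
    have hpq : p ≠ q := by
      intro h
      subst h
      rw [hp] at hq
      simp at hq
    obtain ⟨t, ht⟩ := conflict_pair_tie hsh hpq
      (hp ▸ hslTop p hpA) (fun s hs => hp ▸ hslUniq p hpA s hs)
      (hq ▸ hslTop q hqA) (fun s hs => hq ▸ hslUniq q hqA s hs)
      (hwit3 p q)
    exact ⟨t, p, q, hpA, hqA, hp, hq, ht⟩
  choose! tslot tp tq htpA htqA htpsl htqsl htT using htie
  set W : Finset (Fin d × Bool) := K.image tslot with hW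
  have hWcard : W.card = K.card := by
    rw [hW]
    apply Finset.card_image_of_injOn
    intro i hi j hj hij
    have hti := htT i hi
    have htj := htT j hj
    rw [hij] at hti
    rcases tiePair_overlap htj hti with h | h | h | h
    · have h2 := congrArg sl h
      rw [htpsl i hi, htpsl j hj] at h2
      exact congrArg Prod.fst h2
    · exfalso
      have h2 := congrArg sl h
      rw [htpsl i hi, htqsl j hj] at h2
      simpa using congrArg Prod.snd h2
    · exfalso
      have h2 := congrArg sl h
      rw [htqsl i hi, htpsl j hj] at h2
      simpa using congrArg Prod.snd h2
    · have h2 := congrArg sl h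
      rw [htqsl i hi, htqsl j hj] at h2
      exact congrArg Prod.fst h2
  -- slot budget
  set SA : Finset (Fin d × Bool) := A.biUnion slots with hSA
  set SB : Finset (Fin d × Bool) := B.biUnion slots with hSB
  have hSAcard : SA.card = A.card := by
    rw [hSA, Finset.card_biUnion (fun p _ q _ h => hdisj p q h)]
    rw [Finset.sum_congr rfl (fun p hp => by rw [hslA p hp, Finset.card_singleton])]
    simp
  have hSBcard : 2 * B.card ≤ SB.card := by
    rw [hSB, Finset.card_biUnion (fun p _ q _ h => hdisj p q h)]
    calc 2 * B.card = ∑ _p ∈ B, 2 := by simp [mul_comm]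
      _ ≤ ∑ p ∈ B, (slots p).card := Finset.sum_le_sum hBtwo
  have hdAB : Disjoint SA SB := by
    rw [Finset.disjoint_left]
    intro s hsA hsB
    rw [hSA, Finset.mem_biUnion] at hsA
    rw [hSB, Finset.mem_biUnion] at hsB
    obtain ⟨p, hpA, hps⟩ := hsA
    obtain ⟨q, hqB, hqs⟩ := hsB
    have : p = q := strictTop_unique ((hmem_slots p s).1 hps) ((hmem_slots q s).1 hqs)
    subst this
    rw [hA, Finset.mem_filter] at hpA
    rw [hB, Finset.mem_filter] at hqB
    exact hqB.2 hpA.2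
  have hdW : Disjoint (SA ∪ SB) W := by
    rw [Finset.disjoint_left]
    intro s hs hsW
    rw [hW, Finset.mem_image] at hsW
    obtain ⟨i, hi, rfl⟩ := hsW
    have hnt := tiePair_no_strictTop (htT i hi)
    rw [Finset.mem_union] at hs
    rcases hs with h | h
    · rw [hSA, Finset.mem_biUnion] at h
      obtain ⟨p, _, hps⟩ := h
      exact hnt p ((hmem_slots p _).1 hps)
    · rw [hSB, Finset.mem_biUnion] at h
      obtain ⟨p, _, hps⟩ := h
      exact hnt p ((hmem_slots p _).1 hps)
  have hbudget : A.card + 2 * B.card + K.card ≤ 2 * d := by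
    have h1 : (SA ∪ SB ∪ W).card = SA.card + SB.card + W.card := by
      rw [Finset.card_union_of_disjoint hdW, Finset.card_union_of_disjoint hdAB]
    have h2 : (SA ∪ SB ∪ W).card ≤ Fintype.card (Fin d × Bool) := Finset.card_le_univ _
    simp only [Fintype.card_prod, Fintype.card_fin, Fintype.card_bool] at h2
    omega
  omega

/-! ### Lower bound construction -/

/-- block values: point `j` of a block has coordinates `(bv j 0, bv j 1)` in its block -/
noncomputable def bv (j c : ℕ) : ℝ := if j = 2 then 2 else if j = c then 1 else -1

/-- point `j` of block `k` -/
noncomputable def lbP (d k j : ℕ) : Fin d → ℝ :=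
  fun i => if i.1 / 2 = k then bv j (i.1 % 2) else 0

open Classical in
noncomputable def IxI (m0 m1 m2 : Prop) : Set ℝ :=
  if m2 then (if m1 then Set.univ else Set.Ici (-2⁻¹))
  else if m0 then (if m1 then Set.Iic 1 else Set.univ) else Set.Iic 0

open Classical in
noncomputable def IyI (m0 m1 m2 : Prop) : Set ℝ :=
  if m2 then (if m0 then Set.univ else Set.Ici (-2⁻¹))
  else if m1 then Set.univ else Set.Iic 0

lemma IxI_shape (m0 m1 m2 : Prop) :
    (∃ b, IxI m0 m1 m2 = Set.Iic b) ∨ (∃ a, IxI m0 m1 m2 = Set.Ici a) ∨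
      IxI m0 m1 m2 = Set.univ := by
  unfold IxI
  split_ifs <;>
    first
      | exact Or.inr (Or.inr rfl)
      | exact Or.inr (Or.inl ⟨_, rfl⟩)
      | exact Or.inl ⟨_, rfl⟩

lemma IyI_shape (m0 m1 m2 : Prop) :
    (∃ b, IyI m0 m1 m2 = Set.Iic b) ∨ (∃ a, IyI m0 m1 m2 = Set.Ici a) ∨
      IyI m0 m1 m2 = Set.univ := by
  unfold IyI
  split_ifs <;>
    first
      | exact Or.inr (Or.inr rfl)
      | exact Or.inr (Or.inl ⟨_, rfl⟩)
      | exact Or.inl ⟨_, rfl⟩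

lemma IxI_zero (m0 m1 m2 : Prop) : (0:ℝ) ∈ IxI m0 m1 m2 := by
  unfold IxI; split_ifs <;> norm_num

lemma IyI_zero (m0 m1 m2 : Prop) : (0:ℝ) ∈ IyI m0 m1 m2 := by
  unfold IyI; split_ifs <;> norm_num

lemma mem_IxI_0 {m0 m1 m2 : Prop} (h : m0) : (1:ℝ) ∈ IxI m0 m1 m2 := by
  unfold IxI; split_ifs <;> first | norm_num | tauto

lemma mem_IyI_0 {m0 m1 m2 : Prop} (h : m0) : (-1:ℝ) ∈ IyI m0 m1 m2 := by
  unfold IyI; split_ifs <;> first | norm_num | tauto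

lemma mem_IxI_1 {m0 m1 m2 : Prop} (h : m1) : (-1:ℝ) ∈ IxI m0 m1 m2 := by
  unfold IxI; split_ifs <;> first | norm_num | tauto

lemma mem_IyI_1 {m0 m1 m2 : Prop} (h : m1) : (1:ℝ) ∈ IyI m0 m1 m2 := by
  unfold IyI; split_ifs <;> first | norm_num | tauto

lemma mem_IxI_2 {m0 m1 m2 : Prop} (h : m2) : (2:ℝ) ∈ IxI m0 m1 m2 := by
  unfold IxI; split_ifs <;> first | norm_num | tauto

lemma mem_IyI_2 {m0 m1 m2 : Prop} (h : m2) : (2:ℝ) ∈ IyI m0 m1 m2 := by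
  unfold IyI; split_ifs <;> first | norm_num | tauto

lemma notmem_0 {m0 m1 m2 : Prop} (h : ¬ m0)
    (hx : (1:ℝ) ∈ IxI m0 m1 m2) (hy : (-1:ℝ) ∈ IyI m0 m1 m2) : False := by
  unfold IxI at hx
  unfold IyI at hy
  split_ifs at hx hy <;> first | (norm_num at hx; done) | (norm_num at hy; done) | tauto

lemma notmem_1 {m0 m1 m2 : Prop} (h : ¬ m1)
    (hx : (-1:ℝ) ∈ IxI m0 m1 m2) (hy : (1:ℝ) ∈ IyI m0 m1 m2) : False := by
  unfold IxI at hx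
  unfold IyI at hy
  split_ifs at hx hy <;> first | (norm_num at hx; done) | (norm_num at hy; done) | tauto

lemma notmem_2 {m0 m1 m2 : Prop} (h : ¬ m2)
    (hx : (2:ℝ) ∈ IxI m0 m1 m2) (hy : (2:ℝ) ∈ IyI m0 m1 m2) : False := by
  unfold IxI at hx
  unfold IyI at hy
  split_ifs at hx hy <;> first | (norm_num at hx; done) | (norm_num at hy; done) | tauto

theorem exists_shattered (m d : ℕ) (hm : 1 ≤ m) (hd : d = 2 * m) :
    ∃ σ : Finset (Fin d → ℝ), Shatters (Dd d) ↑σ ∧ σ.card = 3 * m := by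
  classical
  have bv_ne : ∀ j, bv j 0 ≠ 0 := by
    intro j
    unfold bv
    split_ifs <;> norm_num
  set σ₀ : Finset (Fin d → ℝ) :=
    (Finset.range m ×ˢ Finset.range 3).image (fun kj => lbP d kj.1 kj.2) with hσ₀
  have hval : ∀ k j (h : 2 * k + 1 < d),
      lbP d k j ⟨2 * k, by omega⟩ = bv j 0 ∧ lbP d k j ⟨2 * k + 1, h⟩ = bv j 1 := by
    intro k j h
    constructor
    · show (if (2 * k) / 2 = k then bv j ((2 * k) % 2) else 0) = bv j 0
      rw [if_pos (by omega)]
      congr 1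
      omega
    · show (if (2 * k + 1) / 2 = k then bv j ((2 * k + 1) % 2) else 0) = bv j 1
      rw [if_pos (by omega)]
      congr 1
      omega
  have hval0 : ∀ k j k', k' ≠ k → ∀ (h : 2 * k < d), lbP d k' j ⟨2 * k, h⟩ = 0 := by
    intro k j k' hne h
    show (if (2 * k) / 2 = k' then bv j ((2 * k) % 2) else 0) = 0
    rw [if_neg (by omega)]
  have hinj : Set.InjOn (fun kj : ℕ × ℕ => lbP d kj.1 kj.2)
      ↑(Finset.range m ×ˢ Finset.range 3) := by
    rintro ⟨k, j⟩ hkj ⟨k', j'⟩ hkj' heq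
    simp only [Finset.coe_product, Finset.coe_range, Set.mem_prod, Set.mem_Iio] at hkj hkj'
    obtain ⟨hk, hj⟩ := hkj
    obtain ⟨hk', hj'⟩ := hkj'
    simp only at heq
    have hlt : 2 * k + 1 < d := by omega
    have hkk : k = k' := by
      by_contra hne
      have h0 := congrFun heq (⟨2 * k, by omega⟩ : Fin d)
      rw [(hval k j hlt).1, hval0 k j' k' (fun h => hne h.symm) (by omega)] at h0
      exact bv_ne j h0
    subst hkk
    have h0 := congrFun heq (⟨2 * k, by omega⟩ : Fin d)
    have h1 := congrFun heq (⟨2 * k + 1, hlt⟩ : Fin d)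
    rw [(hval k j hlt).1, (hval k j' hlt).1] at h0
    rw [(hval k j hlt).2, (hval k j' hlt).2] at h1
    have : j = j' := by
      interval_cases j <;> interval_cases j' <;> first | rfl | norm_num [bv] at h0 | norm_num [bv] at h1
    rw [this]
  have hcard : σ₀.card = 3 * m := by
    rw [hσ₀, Finset.card_image_of_injOn hinj, Finset.card_product]
    simp [mul_comm]
  refine ⟨σ₀, ?_, hcard⟩
  intro T hT
  set mbf : ℕ → ℕ → Prop := fun k j => lbP d k j ∈ T with hmbf
  set If : Fin d → Set ℝ := fun i =>
    if i.1 % 2 = 0 then IxI (mbf (i.1 / 2) 0) (mbf (i.1 / 2) 1) (mbf (i.1 / 2) 2)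
    else IyI (mbf (i.1 / 2) 0) (mbf (i.1 / 2) 1) (mbf (i.1 / 2) 2) with hIf
  have hIfx : ∀ k (h : 2 * k < d),
      If ⟨2 * k, h⟩ = IxI (mbf k 0) (mbf k 1) (mbf k 2) := by
    intro k h
    show (if (2 * k) % 2 = 0 then _ else _) = _
    rw [if_pos (by omega)]
    have : (2 * k) / 2 = k := by omega
    rw [this]
  have hIfy : ∀ k (h : 2 * k + 1 < d),
      If ⟨2 * k + 1, h⟩ = IyI (mbf k 0) (mbf k 1) (mbf k 2) := by
    intro k h
    show (if (2 * k + 1) % 2 = 0 then _ else _) = _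
    rw [if_neg (by omega)]
    have : (2 * k + 1) / 2 = k := by omega
    rw [this]
  refine ⟨{x | ∀ i, x i ∈ If i}, ⟨If, fun i => ?_, rfl⟩, ?_⟩
  · by_cases h : i.1 % 2 = 0
    · simp only [hIf, if_pos h]
      exact IxI_shape _ _ _
    · simp only [hIf, if_neg h]
      exact IyI_shape _ _ _
  · apply Set.Subset.antisymm
    · rintro z ⟨hzC, hzσ⟩
      have hzi : z ∈ σ₀ := by exact_mod_cast hzσ
      rw [hσ₀, Finset.mem_image] at hzi
      obtain ⟨⟨k, j⟩, hmem, rfl⟩ := hzi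
      rw [Finset.mem_product, Finset.mem_range, Finset.mem_range] at hmem
      obtain ⟨hk, hj⟩ := hmem
      by_contra hnT
      have hmb : ¬ mbf k j := hnT
      have hlt : 2 * k + 1 < d := by omega
      have hx := hzC ⟨2 * k, by omega⟩
      have hy := hzC ⟨2 * k + 1, hlt⟩
      rw [(hval k j hlt).1, hIfx k (by omega)] at hx
      rw [(hval k j hlt).2, hIfy k hlt] at hy
      interval_cases j
      · norm_num [bv] at hx hy
        exact notmem_0 hmb hx hy
      · norm_num [bv] at hx hy
        exact notmem_1 hmb hx hy
      · norm_num [bv] at hx hy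
        exact notmem_2 hmb hx hy
    · intro z hzT
      have hzσ : z ∈ ↑σ₀ := hT hzT
      refine ⟨?_, hzσ⟩
      have hzi : z ∈ σ₀ := by exact_mod_cast hzσ
      rw [hσ₀, Finset.mem_image] at hzi
      obtain ⟨⟨k, j⟩, hmem, rfl⟩ := hzi
      rw [Finset.mem_product, Finset.mem_range, Finset.mem_range] at hmem
      obtain ⟨hk, hj⟩ := hmem
      have hmb : mbf k j := hzT
      intro i
      show (if i.1 / 2 = k then bv j (i.1 % 2) else 0) ∈ If i
      by_cases hik : i.1 / 2 = k
      · rw [if_pos hik]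
        by_cases hp : i.1 % 2 = 0
        · have hi : i = (⟨2 * k, by omega⟩ : Fin d) := by
            apply Fin.ext
            show i.1 = 2 * k
            omega
          rw [hp, hi, hIfx k (by omega)]
          interval_cases j
          · norm_num [bv]
            exact mem_IxI_0 hmb
          · norm_num [bv]
            exact mem_IxI_1 hmb
          · norm_num [bv]
            exact mem_IxI_2 hmb
        · have hp1 : i.1 % 2 = 1 := by omega
          have hi : i = (⟨2 * k + 1, by omega⟩ : Fin d) := by
            apply Fin.ext
            show i.1 = 2 * k + 1
            omega
          rw [hp1, hi, hIfy k (by omega)]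
          interval_cases j
          · norm_num [bv]
            exact mem_IyI_0 hmb
          · norm_num [bv]
            exact mem_IyI_1 hmb
          · norm_num [bv]
            exact mem_IyI_2 hmb
      · rw [if_neg hik]
        by_cases hp : i.1 % 2 = 0
        · simp only [hIf, if_pos hp]
          exact IxI_zero _ _ _
        · simp only [hIf, if_neg hp]
          exact IyI_zero _ _ _

/-- For every even `d ≥ 2`, the VC dimension of the family of all closed degenerate balls
in `ℓ∞^d` lies between `3d/2` and `3d/2 + 1`. -/
theorem vcDim_Dd_even (d : ℕ) (hd : 2 ≤ d) (heven : Even d) :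
    ((3 * d / 2 : ℕ) : ℕ∞) ≤ vcDim (Dd d) ∧
      vcDim (Dd d) ≤ ((3 * d / 2 + 1 : ℕ) : ℕ∞) := by
  obtain ⟨m, hm2⟩ := heven
  have hdm : d = 2 * m := by omega
  have hm1 : 1 ≤ m := by omega
  obtain ⟨σ₀, hsh, hcard⟩ := exists_shattered m d hm1 hdm
  constructor
  · have h1 : (3 * d / 2 : ℕ) = σ₀.card := by omega
    rw [h1]
    exact le_iSup₂_of_le σ₀ hsh le_rfl
  · apply iSup₂_le
    intro σ hσ
    have h2 := two_card_le_of_shatters hd hσ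
    exact_mod_cast Nat.cast_le.2 (show σ.card ≤ 3 * d / 2 + 1 by omega)

end
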